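/- arXiv:1909.09717 — 3 statements merged into one kernel-verified Lean document; each statement's English description precedes it below -/
import Mathlib

section
/- Let A be a normed division algebra and let a, b, c ∈ Im A be purely imaginary elements. Then a*(b*c) + b*(a*c) = −2⟨a,b⟩ • c, (a*b)*c + (a*c)*b = −2⟨b,c⟩ • a, and a*b + b*a = −2⟨a,b⟩ • 1. -/
open scoped RealInnerProductSpace

/-- A normed division algebra: a real inner product space with an `ℝ`-bilinear
multiplication (not necessarily associative or commutative), a two-sided
multiplicative identity `one ≠ 0`, satisfying `‖a*b‖ = ‖a‖ * ‖b‖`. -/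
structure NormedDivisionAlgebra (A : Type*) [NormedAddCommGroup A] [InnerProductSpace ℝ A] where
  mul : A →ₗ[ℝ] A →ₗ[ℝ] A
  one : A
  one_ne_zero : one ≠ 0
  one_mul : ∀ a : A, mul one a = a
  mul_one : ∀ a : A, mul a one = a
  norm_mul : ∀ a b : A, ‖mul a b‖ = ‖a‖ * ‖b‖

namespace NormedDivisionAlgebra

variable {A : Type*} [NormedAddCommGroup A] [InnerProductSpace ℝ A]

/-- `Re a`: the orthogonal projection of `a` onto the real part `Re A = ℝ · 1`. -/
noncomputable def re (D : NormedDivisionAlgebra A) (a : A) : A :=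
  (⟪a, D.one⟫ / ‖D.one‖ ^ 2) • D.one

/-- `Im a`: the orthogonal projection of `a` onto the imaginary part `Im A = (ℝ · 1)ᗮ`. -/
noncomputable def im (D : NormedDivisionAlgebra A) (a : A) : A := a - D.re a

/-- The conjugate `conj a = Re a - Im a`. -/
noncomputable def conj (D : NormedDivisionAlgebra A) (a : A) : A := D.re a - D.im a

/-- The real part `Re A = ℝ · 1` as a submodule. -/
def ReSub (D : NormedDivisionAlgebra A) : Submodule ℝ A := Submodule.span ℝ {D.one}

/-- The imaginary part `Im A = (ℝ · 1)ᗮ` as a submodule. -/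
noncomputable def ImSub (D : NormedDivisionAlgebra A) : Submodule ℝ A := (Submodule.span ℝ {D.one})ᗮ

/-- The commutator `[a, b] = a*b - b*a`. -/
def comm (D : NormedDivisionAlgebra A) (a b : A) : A := D.mul a b - D.mul b a

/-- The associator `[a, b, c] = (a*b)*c - a*(b*c)`. -/
def assoc (D : NormedDivisionAlgebra A) (a b c : A) : A :=
  D.mul (D.mul a b) c - D.mul a (D.mul b c)

/-- The cross product `a × b = Im (a*b)` (intended for `a, b ∈ Im A`). -/
noncomputable def cross (D : NormedDivisionAlgebra A) (a b : A) : A := D.im (D.mul a b)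

end NormedDivisionAlgebra


section Aux

variable {A : Type*} [NormedAddCommGroup A] [InnerProductSpace ℝ A]

private lemma nda_P1 (D : NormedDivisionAlgebra A) (a b c : A) :
    ⟪D.mul a b, D.mul a c⟫ = ‖a‖ ^ 2 * ⟪b, c⟫ := by
  have h := real_inner_eq_norm_add_mul_self_sub_norm_mul_self_sub_norm_mul_self_div_two
    (D.mul a b) (D.mul a c)
  have hadd : D.mul a b + D.mul a c = D.mul a (b + c) := (map_add _ _ _).symm
  rw [hadd, D.norm_mul, D.norm_mul, D.norm_mul] at h
  rw [h, real_inner_eq_norm_add_mul_self_sub_norm_mul_self_sub_norm_mul_self_div_two b c]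
  ring

private lemma nda_exch (D : NormedDivisionAlgebra A) (a b c d : A) :
    ⟪D.mul a c, D.mul b d⟫ + ⟪D.mul a d, D.mul b c⟫ = 2 * ⟪a, b⟫ * ⟪c, d⟫ := by
  have h := nda_P1 D (a + b) c d
  have hc : D.mul (a + b) c = D.mul a c + D.mul b c := by rw [map_add]; rfl
  have hd : D.mul (a + b) d = D.mul a d + D.mul b d := by rw [map_add]; rfl
  rw [hc, hd] at h
  simp only [inner_add_left, inner_add_right] at h
  rw [nda_P1 D a c d, nda_P1 D b c d, norm_add_sq_real a b] at h
  have hsym : ⟪D.mul b c, D.mul a d⟫ = ⟪D.mul a d, D.mul b c⟫ := real_inner_comm _ _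
  nlinarith [h, hsym]

private lemma nda_one_inner (D : NormedDivisionAlgebra A) {a : A} (ha : a ∈ D.ImSub) :
    ⟪a, D.one⟫ = 0 := by
  have := (Submodule.mem_orthogonal _ a).mp ha D.one (Submodule.mem_span_singleton_self _)
  rw [real_inner_comm] at this; exact this

private lemma nda_Lskew (D : NormedDivisionAlgebra A) {a : A} (ha : a ∈ D.ImSub) (x y : A) :
    ⟪D.mul a x, y⟫ = -⟪D.mul a y, x⟫ := by
  have h := nda_exch D a D.one x y
  rw [D.one_mul, D.one_mul, nda_one_inner D ha] at h
  linarith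

private lemma nda_Rskew (D : NormedDivisionAlgebra A) {c : A} (hc : c ∈ D.ImSub) (x y : A) :
    ⟪D.mul x c, y⟫ = -⟪D.mul y c, x⟫ := by
  have h := nda_exch D x y c D.one
  rw [D.mul_one, D.mul_one, nda_one_inner D hc] at h
  linarith [real_inner_comm x (D.mul y c)]

-- first identity, valid for arbitrary c
private lemma nda_main1 (D : NormedDivisionAlgebra A) {a b : A} (c : A)
    (ha : a ∈ D.ImSub) (hb : b ∈ D.ImSub) :
    D.mul a (D.mul b c) + D.mul b (D.mul a c) = (-(2 * ⟪a, b⟫)) • c := by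
  apply ext_inner_right ℝ
  intro d
  rw [inner_add_left, real_inner_smul_left]
  have h1 : ⟪D.mul a (D.mul b c), d⟫ = -⟪D.mul a d, D.mul b c⟫ := by
    rw [nda_Lskew D ha (D.mul b c) d]
  have h2 : ⟪D.mul b (D.mul a c), d⟫ = -⟪D.mul b d, D.mul a c⟫ := by
    rw [nda_Lskew D hb (D.mul a c) d]
  have h3 := nda_exch D a b c d
  have h4 : ⟪D.mul b d, D.mul a c⟫ = ⟪D.mul a c, D.mul b d⟫ := real_inner_comm _ _
  rw [h1, h2]
  linarith

end Aux

theorem nda_polarized_identities_imaginary {A : Type*} [NormedAddCommGroup A]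
    [InnerProductSpace ℝ A] (D : NormedDivisionAlgebra A) (a b c : A)
    (ha : a ∈ D.ImSub) (hb : b ∈ D.ImSub) (hc : c ∈ D.ImSub) :
    D.mul a (D.mul b c) + D.mul b (D.mul a c) = (-(2 * ⟪a, b⟫)) • c ∧
      D.mul (D.mul a b) c + D.mul (D.mul a c) b = (-(2 * ⟪b, c⟫)) • a ∧
      D.mul a b + D.mul b a = (-(2 * ⟪a, b⟫)) • D.one := by
  refine ⟨nda_main1 D c ha hb, ?_, ?_⟩
  · apply ext_inner_right ℝ
    intro d
    rw [inner_add_left, real_inner_smul_left]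
    have h1 : ⟪D.mul (D.mul a b) c, d⟫ = -⟪D.mul d c, D.mul a b⟫ :=
      nda_Rskew D hc (D.mul a b) d
    have h2 : ⟪D.mul (D.mul a c) b, d⟫ = -⟪D.mul d b, D.mul a c⟫ :=
      nda_Rskew D hb (D.mul a c) d
    have h3 := nda_exch D a d b c
    have h4 : ⟪D.mul d c, D.mul a b⟫ = ⟪D.mul a b, D.mul d c⟫ := real_inner_comm _ _
    have h5 : ⟪D.mul d b, D.mul a c⟫ = ⟪D.mul a c, D.mul d b⟫ := real_inner_comm _ _
    have h6 : ⟪a, d⟫ = ⟪d, a⟫ := real_inner_comm _ _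
    rw [h1, h2]
    linarith
  · have := nda_main1 D D.one ha hb
    rwa [D.mul_one, D.mul_one] at this
end

section
/- Let A be a normed division algebra and let a, b, c ∈ Im A be purely imaginary elements. Then the commutator [a,b] = a*b − b*a lies in Im A, and the associator [a,b,c] = (a*b)*c − a*(b*c) lies in Im A. -/
open scoped RealInnerProductSpace

section Aux

variable {A : Type*} [NormedAddCommGroup A] [InnerProductSpace ℝ A]
  (D : NormedDivisionAlgebra A)

lemma nda_norm_one : ‖D.one‖ = 1 := by
  have h := D.norm_mul D.one D.one
  rw [D.mul_one] at h
  have h0 : ‖D.one‖ ≠ 0 := norm_ne_zero_iff.mpr D.one_ne_zero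
  rcases mul_eq_zero.mp (show ‖D.one‖ * (‖D.one‖ - 1) = 0 by nlinarith) with h' | h'
  · exact absurd h' h0
  · linarith

lemma nda_L0 (a c b : A) :
    ⟪D.mul a b, D.mul c b⟫ = ⟪a, c⟫ * ⟪b, b⟫ := by
  have h : ∀ x : A, ⟪D.mul x b, D.mul x b⟫ = ⟪x, x⟫ * ⟪b, b⟫ := by
    intro x
    rw [real_inner_self_eq_norm_sq, real_inner_self_eq_norm_sq,
      real_inner_self_eq_norm_sq, D.norm_mul]
    ring
  have h1 := h (a + c)
  have h2 := h a
  have h3 := h c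
  simp only [map_add, LinearMap.add_apply, inner_add_left, inner_add_right] at h1
  linear_combination (h1 - h2 - h3) / 2 + (real_inner_comm (D.mul c b) (D.mul a b)) / 2
    - ((inner ℝ b b : ℝ) / 2) * real_inner_comm c a

lemma nda_exchange (a b c d : A) :
    ⟪D.mul a b, D.mul c d⟫ + ⟪D.mul a d, D.mul c b⟫ = 2 * ⟪a, c⟫ * ⟪b, d⟫ := by
  have h1 := nda_L0 D a c (b + d)
  have h2 := nda_L0 D a c b
  have h3 := nda_L0 D a c d
  simp only [map_add, inner_add_left, inner_add_right] at h1
  linear_combination h1 - h2 - h3 - (inner ℝ a c : ℝ) * real_inner_comm d b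

lemma nda_mem_im_iff (x : A) : x ∈ D.ImSub ↔ ⟪D.one, x⟫ = 0 := by
  unfold NormedDivisionAlgebra.ImSub
  exact Submodule.mem_orthogonal_singleton_iff_inner_right

/-- `⟪1, x*y⟫ = 2⟪x,1⟫⟪y,1⟫ - ⟪x,y⟫`. -/
lemma nda_inner_one_mul (x y : A) :
    ⟪D.one, D.mul x y⟫ = 2 * ⟪x, D.one⟫ * ⟪y, D.one⟫ - ⟪x, y⟫ := by
  have h := nda_exchange D x y D.one D.one
  rw [D.one_mul, D.mul_one, D.one_mul] at h
  linarith [real_inner_comm D.one (D.mul x y), real_inner_comm (D.mul x y) D.one]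

end Aux

theorem nda_comm_assoc_imaginary {A : Type*} [NormedAddCommGroup A] [InnerProductSpace ℝ A]
    (D : NormedDivisionAlgebra A) (a b c : A)
    (ha : a ∈ D.ImSub) (hb : b ∈ D.ImSub) (hc : c ∈ D.ImSub) :
    D.comm a b ∈ D.ImSub ∧ D.assoc a b c ∈ D.ImSub := by
  rw [nda_mem_im_iff] at ha hb hc
  have ha' : ⟪a, D.one⟫ = 0 := by rw [real_inner_comm]; exact ha
  have hb' : ⟪b, D.one⟫ = 0 := by rw [real_inner_comm]; exact hb
  have hc' : ⟪c, D.one⟫ = 0 := by rw [real_inner_comm]; exact hc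
  constructor
  · rw [nda_mem_im_iff]
    unfold NormedDivisionAlgebra.comm
    rw [inner_sub_right, nda_inner_one_mul, nda_inner_one_mul, ha', hb',
      real_inner_comm a b]
    ring
  · rw [nda_mem_im_iff]
    unfold NormedDivisionAlgebra.assoc
    rw [inner_sub_right, nda_inner_one_mul, nda_inner_one_mul]
    have hab1 : ⟪D.mul a b, D.one⟫ = 2 * ⟪a, D.one⟫ * ⟪b, D.one⟫ - ⟪a, b⟫ := by
      rw [real_inner_comm]; exact nda_inner_one_mul D a b
    have hbc1 : ⟪D.mul b c, D.one⟫ = 2 * ⟪b, D.one⟫ * ⟪c, D.one⟫ - ⟪b, c⟫ := by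
      rw [real_inner_comm]; exact nda_inner_one_mul D b c
    -- ⟪ab, c⟫ = -⟪a, cb⟫
    have e1 : ⟪D.mul a b, D.mul c D.one⟫ + ⟪D.mul a D.one, D.mul c b⟫
        = 2 * ⟪a, c⟫ * ⟪b, D.one⟫ := nda_exchange D a b c D.one
    rw [D.mul_one, D.mul_one, hb'] at e1
    -- ⟪a, bc⟫ : ⟪1·a, b·c⟫ + ⟪1·c, b·a⟫ = 2⟪1,b⟫⟪a,c⟫
    have e2 : ⟪D.mul D.one a, D.mul b c⟫ + ⟪D.mul D.one c, D.mul b a⟫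
        = 2 * ⟪D.one, b⟫ * ⟪a, c⟫ := nda_exchange D D.one a b c
    rw [D.one_mul, D.one_mul, hb] at e2
    -- ⟪a, cb⟫ : ⟪1·a, c·b⟫ + ⟪1·b, c·a⟫ = 2⟪1,c⟫⟪a,b⟫
    have e3 : ⟪D.mul D.one a, D.mul c b⟫ + ⟪D.mul D.one b, D.mul c a⟫
        = 2 * ⟪D.one, c⟫ * ⟪a, b⟫ := nda_exchange D D.one a c b
    rw [D.one_mul, D.one_mul, hc] at e3
    -- ⟪ba, c⟫ : ⟪b·a, c·1⟫ + ⟪b·1, c·a⟫ = 2⟪b,c⟫⟪a,1⟫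
    have e4 : ⟪D.mul b a, D.mul c D.one⟫ + ⟪D.mul b D.one, D.mul c a⟫
        = 2 * ⟪b, c⟫ * ⟪a, D.one⟫ := nda_exchange D b a c D.one
    rw [D.mul_one, D.mul_one, ha'] at e4
    rw [ha', hc']
    ring_nf
    linarith [e1, e2, e3, e4, real_inner_comm c (D.mul b a),
      real_inner_comm (D.mul b a) c]
end

section
/- Let A be a normed division algebra and let a, b ∈ Im A. Then the cross product satisfies a × b = −(b × a), ⟨a × b, a⟩ = 0 and ⟨a × b, b⟩ = 0, and the real part of the product is Re(a*b) = −⟨a,b⟩ • 1; equivalently, a*b = −⟨a,b⟩ • 1 + a × b. -/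
open scoped RealInnerProductSpace

namespace NormedDivisionAlgebra

variable {A : Type*} [NormedAddCommGroup A] [InnerProductSpace ℝ A]

variable (D : NormedDivisionAlgebra A)

lemma inner_mul_self' (a b : A) :
    ⟪D.mul a b, D.mul a b⟫ = ⟪a, a⟫ * ⟪b, b⟫ := by
  rw [real_inner_self_eq_norm_sq, real_inner_self_eq_norm_sq, real_inner_self_eq_norm_sq,
    D.norm_mul]
  ring

lemma inner_mul_right' (a c b : A) :
    ⟪D.mul a b, D.mul c b⟫ = ⟪a, c⟫ * ⟪b, b⟫ := by
  have h := D.inner_mul_self' (a + c) b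
  simp only [map_add, LinearMap.add_apply, inner_add_left, inner_add_right] at h
  have c1 : ⟪D.mul c b, D.mul a b⟫ = ⟪D.mul a b, D.mul c b⟫ := real_inner_comm _ _
  have c2 : ⟪c, a⟫ = ⟪a, c⟫ := real_inner_comm _ _
  rw [D.inner_mul_self' a b, D.inner_mul_self' c b, c1, c2] at h
  linear_combination h / 2

lemma inner_exchange (a b c d : A) :
    ⟪D.mul a b, D.mul c d⟫ + ⟪D.mul a d, D.mul c b⟫ = 2 * ⟪a, c⟫ * ⟪b, d⟫ := by
  have h := D.inner_mul_right' a c (b + d)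
  simp only [map_add, inner_add_left, inner_add_right] at h
  have c2 : ⟪d, b⟫ = ⟪b, d⟫ := real_inner_comm _ _
  rw [D.inner_mul_right' a c b, D.inner_mul_right' a c d, c2] at h
  linear_combination h

lemma norm_one' : ‖D.one‖ = 1 := by
  have h := D.norm_mul D.one D.one
  rw [D.one_mul] at h
  have h0 : ‖D.one‖ ≠ 0 := norm_ne_zero_iff.mpr D.one_ne_zero
  have hpos : 0 < ‖D.one‖ := (norm_nonneg D.one).lt_of_ne (Ne.symm h0)
  nlinarith

lemma inner_one_of_imsub {a : A} (ha : a ∈ D.ImSub) : ⟪a, D.one⟫ = 0 := by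
  rw [real_inner_comm]
  exact ha D.one (Submodule.mem_span_singleton_self _)

lemma re_eq (y : A) : D.re y = ⟪y, D.one⟫ • D.one := by
  rw [re, D.norm_one']
  norm_num

end NormedDivisionAlgebra

theorem nda_cross_product_basic {A : Type*} [NormedAddCommGroup A] [InnerProductSpace ℝ A]
    (D : NormedDivisionAlgebra A) (a b : A) (ha : a ∈ D.ImSub) (hb : b ∈ D.ImSub) :
    D.cross a b = - D.cross b a ∧
      ⟪D.cross a b, a⟫ = 0 ∧
      ⟪D.cross a b, b⟫ = 0 ∧
      D.re (D.mul a b) = (-⟪a, b⟫) • D.one ∧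
      D.mul a b = (-⟪a, b⟫) • D.one + D.cross a b := by
  have ha' : ⟪a, D.one⟫ = 0 := D.inner_one_of_imsub ha
  have hb' : ⟪b, D.one⟫ = 0 := D.inner_one_of_imsub hb
  -- ⟪a*b, 1⟫ = -⟪a, b⟫
  have h1 : ⟪D.mul a b, D.one⟫ = -⟪a, b⟫ := by
    have h := D.inner_exchange a b D.one D.one
    rw [D.one_mul, D.one_mul, D.mul_one, ha', hb'] at h
    linarith
  have h1' : ⟪D.mul b a, D.one⟫ = -⟪a, b⟫ := by
    have h := D.inner_exchange b a D.one D.one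
    rw [D.one_mul, D.one_mul, D.mul_one, ha', hb'] at h
    have c1 : ⟪b, a⟫ = ⟪a, b⟫ := real_inner_comm _ _
    rw [c1] at h
    linarith
  -- ⟪a*b, a⟫ = 0
  have h2 : ⟪D.mul a b, a⟫ = 0 := by
    have h := D.inner_exchange a b a D.one
    rw [D.mul_one] at h
    have c1 : ⟪a, D.mul a b⟫ = ⟪D.mul a b, a⟫ := real_inner_comm _ _
    rw [hb', c1] at h
    linarith
  -- ⟪a*b, b⟫ = 0
  have h3 : ⟪D.mul a b, b⟫ = 0 := by
    have h := D.inner_exchange a b D.one b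
    rw [D.one_mul] at h
    rw [ha'] at h
    linarith
  -- a*b + b*a = -(2⟪a,b⟫) • 1
  have key : D.mul a b + D.mul b a = (-(2 * ⟪a, b⟫)) • D.one := by
    apply ext_inner_left ℝ
    intro x
    have e1 := D.inner_exchange a b x D.one
    rw [D.mul_one, D.mul_one] at e1
    have e2 := D.inner_exchange b a x D.one
    rw [D.mul_one, D.mul_one] at e2
    have e3 := D.inner_exchange x b D.one a
    rw [D.one_mul, D.one_mul] at e3
    rw [inner_add_right, inner_smul_right]
    simp only [ha', hb', mul_zero] at e1 e2
    have c1 : ⟪x, D.mul a b⟫ = ⟪D.mul a b, x⟫ := real_inner_comm _ _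
    have c2 : ⟪x, D.mul b a⟫ = ⟪D.mul b a, x⟫ := real_inner_comm _ _
    have s1 : ⟪a, D.mul x b⟫ = ⟪D.mul x b, a⟫ := real_inner_comm _ _
    have s2 : ⟪b, D.mul x a⟫ = ⟪D.mul x a, b⟫ := real_inner_comm _ _
    have s3 : ⟪b, a⟫ = ⟪a, b⟫ := real_inner_comm _ _
    rw [s3] at e3
    have prod : 2 * ⟪x, D.one⟫ * ⟪a, b⟫ = -(-(2 * ⟪a, b⟫) * ⟪x, D.one⟫) := by ring
    rw [prod] at e3
    linarith
  have hre : D.re (D.mul a b) = (-⟪a, b⟫) • D.one := by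
    rw [D.re_eq, h1]
  have hcross : D.cross a b = D.mul a b - (-⟪a, b⟫) • D.one := by
    rw [NormedDivisionAlgebra.cross, NormedDivisionAlgebra.im, hre]
  have hre' : D.re (D.mul b a) = (-⟪a, b⟫) • D.one := by
    rw [D.re_eq, h1']
  have hcross' : D.cross b a = D.mul b a - (-⟪a, b⟫) • D.one := by
    rw [NormedDivisionAlgebra.cross, NormedDivisionAlgebra.im, hre']
  refine ⟨?_, ?_, ?_, hre, ?_⟩
  · rw [hcross, hcross']
    have : D.mul a b = (-(2 * ⟪a, b⟫)) • D.one - D.mul b a := by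
      rw [← key]; abel
    rw [this]
    have : (-(2 * ⟪a, b⟫) : ℝ) • D.one = (-⟪a, b⟫) • D.one + (-⟪a, b⟫) • D.one := by
      rw [← add_smul]; ring_nf
    rw [this]; abel
  · rw [hcross, inner_sub_left, inner_smul_left, h2]
    have c1 : ⟪D.one, a⟫ = ⟪a, D.one⟫ := real_inner_comm _ _
    rw [c1, ha']
    simp
  · rw [hcross, inner_sub_left, inner_smul_left, h3]
    have c1 : ⟪D.one, b⟫ = ⟪b, D.one⟫ := real_inner_comm _ _
    rw [c1, hb']
    simp
  · rw [hcross]; abel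
end
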